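/- Let n ≥ 2 be even, set m := 3n/2, and let γ = (γ_t)_{0 ≤ t ≤ 3n} be a univariate truncated moment sequence. The following are equivalent: (1) γ admits a [0,∞)-representing measure; (2) γ admits a (rank γ)-atomic [0,∞)-representing measure; (3) H_m(γ) = (γ_{i+j})_{i,j=0}^{m} is positive semidefinite, (γ_{i+j+1})_{i,j=0}^{m−1} is positive semidefinite, and the vector (γ_{m+1}, …, γ_{2m})ᵀ lies in the column space of (γ_{i+j+1})_{i,j=0}^{m−1}. Moreover, in this case rank γ ≤ m + 1. -/

import Mathlib

open MeasureTheory Matrix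

noncomputable section

/-- The `s × s` Hankel matrix `(γ_{i+j})_{i,j=0}^{s-1}`; the matrix `H_m(γ)` of the paper
is `hankel (m+1) γ`. -/
def hankel (s : ℕ) (γ : ℕ → ℝ) : Matrix (Fin s) (Fin s) ℝ :=
  fun i j => γ ((i : ℕ) + (j : ℕ))

/-- The rank of a truncated sequence `(γ_t)_{t ≤ 2k}` (with `H_k(γ)` psd): it is `k+1` if
`H_k(γ)` is nonsingular, and otherwise the least `i` such that `H_i(γ)` is singular. -/
def seqRank (k : ℕ) (γ : ℕ → ℝ) : ℕ := by
  classical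
  exact if h : ∃ i, i ≤ k ∧ (hankel (i+1) γ).det = 0 then Nat.find h else k + 1

/-- With `r := seqRank`, the recursion `γ_j = φ₀ γ_{j-r} + ⋯ + φ_{r-1} γ_{j-1}` where
`(φ₀, …, φ_{r-1})ᵀ = H_{r-1}(γ)⁻¹ (γ_r, …, γ_{2r-1})ᵀ`, for all `r ≤ j ≤ hi`. -/
def recurHolds (r : ℕ) (γ : ℕ → ℝ) (hi : ℕ) : Prop :=
  ∀ j : ℕ, r ≤ j → j ≤ hi →
    γ j = ∑ i : Fin r,
      ((hankel r γ)⁻¹.mulVec (fun i : Fin r => γ (r + (i : ℕ)))) i * γ (j - r + (i : ℕ))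

/-- `(γ_t)_{t ≤ 2k}` is positively recursively generated. -/
def PRG (k : ℕ) (γ : ℕ → ℝ) : Prop :=
  (hankel (seqRank k γ) γ).PosDef ∧ recurHolds (seqRank k γ) γ (2 * k)

/-- `ν` is an `E`-representing measure for the univariate sequence `(γ_t)_{t ≤ N}`. -/
def IsRepMeasure1 (N : ℕ) (γ : ℕ → ℝ) (E : Set ℝ) (ν : Measure ℝ) : Prop :=
  ν Eᶜ = 0 ∧ ∀ t : ℕ, t ≤ N →
    Integrable (fun x : ℝ => x ^ t) ν ∧ γ t = ∫ x : ℝ, x ^ t ∂ν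

/-- `ν` is `r`-atomic: a sum of `r` point masses with strictly positive weights at `r`
distinct points. -/
def IsAtomicMeasure1 (r : ℕ) (ν : Measure ℝ) : Prop :=
  ∃ (x : Fin r → ℝ) (c : Fin r → ℝ), Function.Injective x ∧ (∀ i, 0 < c i) ∧
    ν = ∑ i : Fin r, ENNReal.ofReal (c i) • Measure.dirac (x i)

namespace CF


lemma hankel_isHermitian (s : ℕ) (γ : ℕ → ℝ) : (hankel s γ).IsHermitian := by
  ext i j
  simp [hankel, Matrix.conjTranspose_apply, Nat.add_comm]

lemma hankel_submatrix {s s' : ℕ} (h : s ≤ s') (γ : ℕ → ℝ) :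
    hankel s γ = (hankel s' γ).submatrix (Fin.castLE h) (Fin.castLE h) := rfl

lemma hankel_psd_mono {s s' : ℕ} (h : s ≤ s') {γ : ℕ → ℝ}
    (hp : (hankel s' γ).PosSemidef) : (hankel s γ).PosSemidef := by
  rw [hankel_submatrix h γ]
  exact hp.submatrix _

lemma posDef_of_psd_det_ne_zero {s : ℕ} {M : Matrix (Fin s) (Fin s) ℝ}
    (h : M.PosSemidef) (hd : M.det ≠ 0) : M.PosDef := by
  refine Matrix.posDef_iff_dotProduct_mulVec.mpr ⟨h.1, fun x hx => ?_⟩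
  rcases lt_or_eq_of_le (h.dotProduct_mulVec_nonneg x) with hlt | heq
  · simpa using hlt
  · exfalso
    apply hx
    have hM : M *ᵥ x = 0 := (h.dotProduct_mulVec_zero_iff x).mp (by simpa using heq.symm)
    have : M⁻¹ *ᵥ (M *ᵥ x) = x := by
      rw [Matrix.mulVec_mulVec, Matrix.nonsing_inv_mul M (isUnit_iff_ne_zero.mpr hd),
        Matrix.one_mulVec]
    rw [hM, Matrix.mulVec_zero] at this
    exact this.symm

lemma symm_dot_mulVec {s : ℕ} {M : Matrix (Fin s) (Fin s) ℝ} (hM : Mᵀ = M)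
    (y b : Fin s → ℝ) : (M *ᵥ y) ⬝ᵥ b = y ⬝ᵥ (M *ᵥ b) := by
  rw [Matrix.dotProduct_mulVec y M b, ← Matrix.mulVec_transpose, hM, dotProduct_comm]

lemma exists_mulVec_eq_of_ker_perp {s : ℕ} {M : Matrix (Fin s) (Fin s) ℝ} (hM : Mᵀ = M)
    (c : Fin s → ℝ) (h : ∀ u, M *ᵥ u = 0 → c ⬝ᵥ u = 0) : ∃ v, M *ᵥ v = c := by
  classical
  set f := M.mulVecLin with hf
  have hdisj : LinearMap.range f ⊓ LinearMap.ker f = ⊥ := by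
    rw [Submodule.eq_bot_iff]
    rintro x ⟨⟨y, rfl⟩, hxk⟩
    have hk : M *ᵥ y ∈ LinearMap.ker f := hxk
    have h0 : M *ᵥ (M *ᵥ y) = 0 := hk
    have : (M *ᵥ y) ⬝ᵥ (M *ᵥ y) = 0 := by
      rw [symm_dot_mulVec hM y (M *ᵥ y), h0, dotProduct_zero]
    exact dotProduct_self_eq_zero.mp this
  have hsup : LinearMap.range f ⊔ LinearMap.ker f = ⊤ := by
    apply Submodule.eq_top_of_finrank_eq
    have h1 := Submodule.finrank_sup_add_finrank_inf_eq (LinearMap.range f) (LinearMap.ker f)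
    rw [hdisj] at h1
    simp only [finrank_bot, add_zero] at h1
    rw [h1, LinearMap.finrank_range_add_finrank_ker f]
  have hc : c ∈ LinearMap.range f ⊔ LinearMap.ker f := hsup ▸ Submodule.mem_top
  rcases Submodule.mem_sup.mp hc with ⟨a, ha, b, hb, hab⟩
  rcases ha with ⟨y, rfl⟩
  have hb0 : M *ᵥ b = 0 := hb
  have hcb : c ⬝ᵥ b = 0 := h b hb0
  have hab' : (M *ᵥ y) ⬝ᵥ b + b ⬝ᵥ b = 0 := by
    have : (f y + b) ⬝ᵥ b = 0 := by rw [hab]; exact hcb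
    simpa [add_dotProduct, hf] using this
  have hMyb : (M *ᵥ y) ⬝ᵥ b = 0 := by
    rw [symm_dot_mulVec hM y b, hb0, dotProduct_zero]
  have hbb : b ⬝ᵥ b = 0 := by linarith
  have hb0' : b = 0 := dotProduct_self_eq_zero.mp hbb
  exact ⟨y, by rw [← hab, hb0', add_zero]; rfl⟩


def Moments (N : ℕ) (γ : ℕ → ℝ) (ν : Measure ℝ) : Prop :=
  ∀ t : ℕ, t ≤ N → Integrable (fun x : ℝ => x ^ t) ν ∧ γ t = ∫ x : ℝ, x ^ t ∂ν

lemma hankel_transpose (s : ℕ) (γ : ℕ → ℝ) : (hankel s γ)ᵀ = hankel s γ := by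
  ext i j
  show γ ((j:ℕ) + (i:ℕ)) = γ ((i:ℕ) + (j:ℕ))
  rw [Nat.add_comm]


/-- pointwise expansion -/
lemma poly_sq_expand (e s : ℕ) (v : Fin s → ℝ) (x : ℝ) :
    x^e * (∑ i : Fin s, v i * x^(i:ℕ))^2
      = ∑ i : Fin s, ∑ j : Fin s, v i * v j * x ^ ((i:ℕ)+(j:ℕ)+e) := by
  rw [sq, Finset.sum_mul_sum, Finset.mul_sum]
  refine Finset.sum_congr rfl fun i _ => ?_
  rw [Finset.mul_sum]
  refine Finset.sum_congr rfl fun j _ => ?_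
  rw [pow_add, pow_add]
  ring

section
variable {N : ℕ} {γ : ℕ → ℝ} {ν : Measure ℝ}

lemma quad_integral (hI : Moments N γ ν) (s e : ℕ) (hse : 2*(s-1)+e ≤ N) (v : Fin s → ℝ) :
    v ⬝ᵥ (hankel s (fun t => γ (t+e))) *ᵥ v
      = ∫ x : ℝ, x^e * (∑ i : Fin s, v i * x^(i:ℕ))^2 ∂ν := by
  have hle : ∀ i j : Fin s, (i:ℕ) + (j:ℕ) + e ≤ N := fun i j => by
    have hi := i.isLt; have hj := j.isLt; omega
  have hint : ∀ (i j : Fin s), Integrable (fun x : ℝ => v i * v j * x ^ ((i:ℕ)+(j:ℕ)+e)) ν :=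
    fun i j => ((hI _ (hle i j)).1.const_mul _)
  have key : v ⬝ᵥ (hankel s (fun t => γ (t+e))) *ᵥ v
      = ∑ i : Fin s, ∑ j : Fin s, ∫ x : ℝ, v i * v j * x ^ ((i:ℕ)+(j:ℕ)+e) ∂ν := by
    simp only [dotProduct, Matrix.mulVec, hankel, Finset.mul_sum]
    refine Finset.sum_congr rfl fun i _ => Finset.sum_congr rfl fun j _ => ?_
    rw [(hI _ (hle i j)).2, MeasureTheory.integral_const_mul]
    ring
  rw [key]
  rw [show (∫ x : ℝ, x^e * (∑ i : Fin s, v i * x^(i:ℕ))^2 ∂ν)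
        = ∫ x : ℝ, ∑ i : Fin s, ∑ j : Fin s, v i * v j * x ^ ((i:ℕ)+(j:ℕ)+e) ∂ν from
    integral_congr_ae (Filter.Eventually.of_forall fun x => poly_sq_expand e s v x)]
  rw [MeasureTheory.integral_finset_sum _ (fun i _ => integrable_finset_sum _ (fun j _ => hint i j))]
  exact Finset.sum_congr rfl fun i _ =>
    (MeasureTheory.integral_finset_sum _ (fun j _ => hint i j)).symm

lemma integrable_poly_sq (hI : Moments N γ ν) (s e : ℕ) (hse : 2*(s-1)+e ≤ N) (v : Fin s → ℝ) :
    Integrable (fun x : ℝ => x^e * (∑ i : Fin s, v i * x^(i:ℕ))^2) ν := by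
  have hle : ∀ i j : Fin s, (i:ℕ) + (j:ℕ) + e ≤ N := fun i j => by
    have hi := i.isLt; have hj := j.isLt; omega
  have : Integrable (fun x : ℝ => ∑ i : Fin s, ∑ j : Fin s, v i * v j * x ^ ((i:ℕ)+(j:ℕ)+e)) ν :=
    integrable_finset_sum _ (fun i _ => integrable_finset_sum _
      (fun j _ => ((hI _ (hle i j)).1.const_mul _)))
  exact this.congr (Filter.Eventually.of_forall fun x => (poly_sq_expand e s v x).symm)

lemma ae_nonneg (h0 : ν (Set.Ici (0:ℝ))ᶜ = 0) : ∀ᵐ x ∂ν, (0:ℝ) ≤ x := by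
  have hs : {a : ℝ | ¬ (0:ℝ) ≤ a} = (Set.Ici (0:ℝ))ᶜ := by
    ext x; simp [not_le]
  rw [MeasureTheory.ae_iff, hs]
  exact h0

lemma hankel_psd (hI : Moments N γ ν) (h0 : ν (Set.Ici (0:ℝ))ᶜ = 0) (s e : ℕ) (he : e ≤ 1)
    (hse : 2*(s-1)+e ≤ N) : (hankel s (fun t => γ (t+e))).PosSemidef := by
  refine Matrix.PosSemidef.of_dotProduct_mulVec_nonneg ?_ ?_
  · ext i j
    simp only [hankel, Matrix.conjTranspose_apply, star_trivial]
    congr 1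
    omega
  · intro v
    simp only [star_trivial, RCLike.ofReal_real_eq_id, id]
    rw [quad_integral hI s e hse v]
    refine MeasureTheory.integral_nonneg_of_ae ?_
    filter_upwards [ae_nonneg h0] with x hx
    positivity

end



section
variable {N m : ℕ} {γ : ℕ → ℝ} {ν : Measure ℝ}

lemma exists_range_v (hI : Moments N γ ν) (h0 : ν (Set.Ici (0:ℝ))ᶜ = 0)
    (hm1 : 1 ≤ m) (hmN : 2*m ≤ N) :
    ∃ v : Fin m → ℝ, (hankel m (fun t => γ (t+1))) *ᵥ v = fun i : Fin m => γ (m+1+(i:ℕ)) := by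
  apply exists_mulVec_eq_of_ker_perp (hankel_transpose m _)
  intro u hu
  have hq0 : u ⬝ᵥ (hankel m (fun t => γ (t+1))) *ᵥ u = 0 := by rw [hu, dotProduct_zero]
  have hse : 2*(m-1)+1 ≤ N := by omega
  have hint := integrable_poly_sq hI m 1 hse u
  have hq : (∫ x : ℝ, x^1 * (∑ i : Fin m, u i * x^(i:ℕ))^2 ∂ν) = 0 := by
    rw [← quad_integral hI m 1 hse u]; exact hq0
  have hae : (fun x : ℝ => x^1 * (∑ i : Fin m, u i * x^(i:ℕ))^2) =ᵐ[ν] 0 := by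
    refine (integral_eq_zero_iff_of_nonneg_ae ?_ hint).mp hq
    filter_upwards [ae_nonneg h0] with x hx
    positivity
  -- hence x * q(x) = 0 a.e.
  have haq : ∀ᵐ x ∂ν, x * (∑ i : Fin m, u i * x^(i:ℕ)) = 0 := by
    filter_upwards [hae] with x hx
    simp only [pow_one, Pi.zero_apply] at hx
    rcases mul_eq_zero.mp hx with h | h
    · rw [h, zero_mul]
    · have h2 := (pow_eq_zero_iff (two_ne_zero)).mp h
      rw [h2, mul_zero]
  -- c ⬝ᵥ u = ∫ x^{m+1} q(x) = 0
  have hle : ∀ i : Fin m, m+1+(i:ℕ) ≤ N := fun i => by have := i.isLt; omega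
  have key : (fun i : Fin m => γ (m+1+(i:ℕ))) ⬝ᵥ u
      = ∫ x : ℝ, ∑ i : Fin m, u i * x ^ (m+1+(i:ℕ)) ∂ν := by
    rw [MeasureTheory.integral_finset_sum _ (fun i _ => ((hI _ (hle i)).1.const_mul _))]
    simp only [dotProduct]
    refine Finset.sum_congr rfl fun i _ => ?_
    rw [(hI _ (hle i)).2, MeasureTheory.integral_const_mul]
    ring
  rw [key]
  have : (fun x : ℝ => ∑ i : Fin m, u i * x ^ (m+1+(i:ℕ))) =ᵐ[ν] 0 := by
    filter_upwards [haq] with x hx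
    have hexp : ∑ i : Fin m, u i * x ^ (m+1+(i:ℕ))
        = x^m * (x * ∑ i : Fin m, u i * x^(i:ℕ)) := by
      rw [Finset.mul_sum, Finset.mul_sum]
      refine Finset.sum_congr rfl fun i _ => ?_
      rw [pow_add, pow_add, pow_one]
      ring
    simp only [Pi.zero_apply, hexp, hx, mul_zero]
  rw [MeasureTheory.integral_congr_ae this]
  simp

/-- for a real psd matrix, zero diagonal entry kills the row -/
lemma psd_row_zero {s : ℕ} {M : Matrix (Fin s) (Fin s) ℝ} (h : M.PosSemidef)
    {i : Fin s} (hd : M i i = 0) (j : Fin s) : M i j = 0 := by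
  obtain ⟨B, hB⟩ : ∃ B : Matrix (Fin s) (Fin s) ℝ, M = Bᴴ * B := by
    open scoped MatrixOrder in
    exact ⟨CFC.sqrt M, by
      rw [(CFC.sqrt_nonneg M).posSemidef.isHermitian.eq, CFC.sqrt_mul_sqrt_self M h.nonneg]⟩
  have hent : ∀ p q : Fin s, M p q = ∑ k, B k p * B k q := by
    intro p q
    rw [hB]
    simp [Matrix.mul_apply, Matrix.conjTranspose_apply]
  have hdiag : ∑ k, B k i * B k i = 0 := by rw [← hent i i]; exact hd
  have hcol : ∀ k, B k i = 0 := by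
    intro k
    have hnn : ∀ k ∈ Finset.univ, (0:ℝ) ≤ B k i * B k i := fun k _ => mul_self_nonneg _
    have := (Finset.sum_eq_zero_iff_of_nonneg hnn).mp hdiag k (Finset.mem_univ k)
    exact mul_self_eq_zero.mp this
  rw [hent]
  simp [hcol]

lemma zero_case (hm : 1 ≤ m) (hpsd : (hankel (m+1) γ).PosSemidef) (hγ0 : γ 0 = 0)
    (hv : ∃ v : Fin m → ℝ,
      (hankel m (fun t => γ (t+1))) *ᵥ v = fun i : Fin m => γ (m+1+(i:ℕ))) :
    ∀ t ≤ 2*m, γ t = 0 := by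
  have main : ∀ t, t ≤ 2*m - 1 → γ t = 0 := by
    intro t
    induction t using Nat.strong_induction_on with
    | _ t ih =>
      intro ht
      by_cases hcase : t ≤ m
      · have h00 : hankel (m+1) γ ⟨0, by omega⟩ ⟨0, by omega⟩ = 0 := by
          simpa [hankel] using hγ0
        have := psd_row_zero hpsd h00 ⟨t, by omega⟩
        simpa [hankel] using this
      · push_neg at hcase
        set a := t - m with ha
        have haa : γ (2*a) = 0 := ih (2*a) (by omega) (by omega)
        have hdd : hankel (m+1) γ ⟨a, by omega⟩ ⟨a, by omega⟩ = 0 := by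
          simpa [hankel, two_mul] using haa
        have := psd_row_zero hpsd hdd ⟨m, by omega⟩
        simp only [hankel] at this
        convert this using 2
        omega
  intro t ht
  by_cases htop : t ≤ 2*m - 1
  · exact main t htop
  · have ht2 : t = 2*m := by omega
    obtain ⟨v, hv⟩ := hv
    have hrow := congrFun hv ⟨m-1, by omega⟩
    simp only [Matrix.mulVec, dotProduct, hankel] at hrow
    have hz : ∀ j : Fin m, γ (m-1+(j:ℕ)+1) = 0 := fun j => by
      have := j.isLt
      exact main _ (by omega)
    rw [ht2]
    have : m + 1 + (m-1) = 2*m := by omega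
    rw [← this]
    rw [← hrow]
    apply Finset.sum_eq_zero
    intro j _
    rw [hz j, zero_mul]

end



def Urel (γ : ℕ → ℝ) (r : ℕ) (u : Fin (r+1) → ℝ) (s : ℕ) : Prop :=
  ∑ j : Fin (r+1), γ (s + (j:ℕ)) * u j = 0

lemma sum_mul_shift {q n : ℕ} (t : ℕ) (h : t + q < n) (f : ℕ → ℝ) (u : Fin (q+1) → ℝ) :
    ∑ b : Fin n, f (b:ℕ) * (∑ j : Fin (q+1), if ((b:ℕ) = t + (j:ℕ)) then u j else 0)
      = ∑ j : Fin (q+1), f (t + (j:ℕ)) * u j := by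
  simp only [Finset.mul_sum, mul_ite, mul_zero]
  rw [Finset.sum_comm]
  refine Finset.sum_congr rfl fun j _ => ?_
  have hj := j.isLt
  refine (Finset.sum_eq_single (⟨t + (j:ℕ), by omega⟩ : Fin n) ?_ ?_).trans ?_
  · intro b _ hb
    rw [if_neg]
    intro hc
    exact hb (Fin.ext (by simpa using hc))
  · intro hmem
    exact absurd (Finset.mem_univ _) hmem
  · simp

lemma hankel_mulVec_shift {γ : ℕ → ℝ} {r : ℕ} (n t : ℕ) (h : t + r < n)
    (u : Fin (r+1) → ℝ) (a : Fin n) :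
    (hankel n γ *ᵥ (fun b : Fin n =>
        ∑ j : Fin (r+1), if ((b:ℕ) = t + (j:ℕ)) then u j else 0)) a
      = ∑ j : Fin (r+1), γ ((a:ℕ) + t + (j:ℕ)) * u j := by
  simp only [Matrix.mulVec, dotProduct, hankel]
  rw [sum_mul_shift t h (fun s => γ ((a:ℕ) + s)) u]
  exact Finset.sum_congr rfl fun j _ => by rw [← Nat.add_assoc]

section
variable {γ : ℕ → ℝ} {m r : ℕ}

lemma urel_base (u : Fin (r+1) → ℝ) (hker : (hankel (r+1) γ) *ᵥ u = 0)
    {i : ℕ} (hi : i ≤ r) : Urel γ r u i := by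
  have := congrFun hker ⟨i, by omega⟩
  simpa [Matrix.mulVec, dotProduct, hankel, Urel] using this

lemma propagation (hr : 1 ≤ r) (hrm : r ≤ m)
    (hpsd : (hankel (m+1) γ).PosSemidef)
    (u : Fin (r+1) → ℝ) (hker : (hankel (r+1) γ) *ᵥ u = 0)
    (hv : ∃ v : Fin m → ℝ,
      (hankel m (fun t => γ (t+1))) *ᵥ v = fun i : Fin m => γ (m+1+(i:ℕ))) :
    ∀ s, s + r ≤ 2*m → Urel γ r u s := by
  -- main inductive claim
  have Qmain : ∀ t, (t = 0 ∨ t + r < m) → ∀ a : ℕ, a ≤ m → Urel γ r u (a + t) := by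
    intro t
    induction t using Nat.strong_induction_on with
    | _ t ih =>
      intro hcond
      have htr : t + r < m + 1 := by rcases hcond with h | h <;> omega
      set w : Fin (m+1) → ℝ :=
        fun b => ∑ j : Fin (r+1), if ((b:ℕ) = t + (j:ℕ)) then u j else 0 with hw
      have hQF : dotProduct w ((hankel (m+1) γ) *ᵥ w) = 0 := by
        have h1 : ∀ b : Fin (m+1), ((hankel (m+1) γ) *ᵥ w) b
            = ∑ j : Fin (r+1), γ ((b:ℕ) + t + (j:ℕ)) * u j :=
          fun b => hankel_mulVec_shift (m+1) t htr u b
        calc dotProduct w ((hankel (m+1) γ) *ᵥ w)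
            = ∑ b : Fin (m+1),
              (∑ j : Fin (r+1), γ ((b:ℕ) + t + (j:ℕ)) * u j) * w b := by
              simp only [dotProduct]
              refine Finset.sum_congr rfl fun b _ => ?_
              rw [h1 b, mul_comm]
          _ = ∑ i : Fin (r+1),
              (∑ j : Fin (r+1), γ ((t + (i:ℕ)) + t + (j:ℕ)) * u j) * u i := by
              rw [hw]
              exact sum_mul_shift t htr
                (fun s => ∑ j : Fin (r+1), γ (s + t + (j:ℕ)) * u j) u
          _ = 0 := by
              refine Finset.sum_eq_zero fun i _ => ?_
              have hi := i.isLt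
              have hinner : ∑ j : Fin (r+1), γ ((t + (i:ℕ)) + t + (j:ℕ)) * u j
                  = ∑ j : Fin (r+1), γ ((2*t + (i:ℕ)) + (j:ℕ)) * u j := by
                refine Finset.sum_congr rfl fun j _ => ?_
                congr 2
                omega
              rw [hinner]
              rcases hcond with h0 | hlt
              · subst h0
                have := urel_base u hker (i := (2*0 + (i:ℕ))) (by omega)
                rw [this]
                exact zero_mul _
              · rcases Nat.eq_zero_or_pos t with h0 | hpos
                · subst h0
                  have := urel_base u hker (i := (2*0 + (i:ℕ))) (by omega)
                  rw [this]
                  exact zero_mul _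
                · have hprev := ih (t-1) (by omega)
                    (by rcases Nat.eq_or_lt_of_le hpos with h1 | h1
                        · left; omega
                        · right; omega)
                    (t + (i:ℕ) + 1) (by omega)
                  have : (t + (i:ℕ) + 1) + (t-1) = 2*t + (i:ℕ) := by omega
                  rw [this] at hprev
                  rw [hprev]
                  exact zero_mul _
      have hHw : (hankel (m+1) γ) *ᵥ w = 0 := by
        refine (hpsd.dotProduct_mulVec_zero_iff w).mp ?_
        simpa using hQF
      intro a ha
      have := congrFun hHw ⟨a, by omega⟩
      rw [hankel_mulVec_shift (m+1) t htr u ⟨a, by omega⟩] at this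
      simpa [Urel] using this
  have cover1 : ∀ s, (s ≤ m ∨ s + r + 1 ≤ 2*m) → Urel γ r u s := by
    intro s hs
    by_cases hsm : s ≤ m
    · have := Qmain 0 (Or.inl rfl) s hsm
      simpa using this
    · push_neg at hsm
      have hs2 : s + r + 1 ≤ 2*m := by rcases hs with h | h; omega; exact h
      have := Qmain (s - m) (Or.inr (by omega)) m (le_refl m)
      have he : m + (s - m) = s := by omega
      rwa [he] at this
  intro s hs
  by_cases hcov : s ≤ m ∨ s + r + 1 ≤ 2*m
  · exact cover1 s hcov
  · -- top case : s = 2*m - r, r < m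
    push_neg at hcov
    obtain ⟨hsm, hs2⟩ := hcov
    have hseq : s = 2*m - r := by omega
    have hrltm : r < m := by omega
    obtain ⟨v, hvv⟩ := hv
    set B := hankel m (fun t => γ (t+1)) with hB
    set w : Fin m → ℝ :=
      fun b => ∑ j : Fin (r+1), if ((b:ℕ) = (m - 1 - r) + (j:ℕ)) then u j else 0 with hw
    have htm : (m - 1 - r) + r < m := by omega
    have hBw : B *ᵥ w = 0 := by
      funext a
      have ha := a.isLt
      show ∑ b : Fin m, B a b * w b = 0
      have : ∑ b : Fin m, B a b * w b
          = ∑ j : Fin (r+1), γ ((a:ℕ) + ((m-1-r) + (j:ℕ)) + 1) * u j := by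
        rw [hw, hB]
        exact sum_mul_shift (m-1-r) htm (fun s => γ ((a:ℕ) + s + 1)) u
      rw [this]
      have hU : Urel γ r u ((a:ℕ) + m - r) :=
        cover1 _ (Or.inr (by omega))
      have : ∑ j : Fin (r+1), γ ((a:ℕ) + ((m-1-r) + (j:ℕ)) + 1) * u j
          = ∑ j : Fin (r+1), γ (((a:ℕ) + m - r) + (j:ℕ)) * u j := by
        refine Finset.sum_congr rfl fun j _ => ?_
        congr 2
        omega
      rw [this]
      exact hU
    have h0 : dotProduct w (B *ᵥ v) = 0 := by
      rw [← symm_dot_mulVec (by rw [hB]; exact hankel_transpose m _) w v, hBw]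
      exact zero_dotProduct v
    rw [hvv] at h0
    have hfin : ∑ j : Fin (r+1), γ (m + 1 + ((m-1-r) + (j:ℕ))) * u j = 0 := by
      rw [← sum_mul_shift (m-1-r) htm (fun s => γ (m+1+s)) u]
      simpa [dotProduct, hw, mul_comm] using h0
    have : Urel γ r u (2*m - r) := by
      unfold Urel
      rw [← hfin]
      refine Finset.sum_congr rfl fun j _ => ?_
      congr 2
      omega
    rwa [hseq]

-- extraction of φ from kernel vector
lemma phi_extract (hr : 1 ≤ r) (hPD : (hankel r γ).PosDef)
    (u : Fin (r+1) → ℝ) (hu0 : u ≠ 0) (hker : (hankel (r+1) γ) *ᵥ u = 0) :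
    ∃ φ : Fin r → ℝ,
      (∀ s, Urel γ r u s → γ (s + r) = ∑ j : Fin r, φ j * γ (s + (j:ℕ))) := by
  have hL : u (Fin.last r) ≠ 0 := by
    intro hL0
    apply hu0
    have hdet : IsUnit (hankel r γ).det := isUnit_iff_ne_zero.mpr (ne_of_gt hPD.det_pos)
    set u' : Fin r → ℝ := fun j => u j.castSucc with hu'
    have hker' : (hankel r γ) *ᵥ u' = 0 := by
      funext i
      have hi := i.isLt
      have hrow := congrFun hker ⟨(i:ℕ), by omega⟩
      simp only [Matrix.mulVec, dotProduct, hankel, Pi.zero_apply] at hrow ⊢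
      rw [Fin.sum_univ_castSucc] at hrow
      simp only [Fin.coe_castSucc, Fin.val_last, hL0, mul_zero, add_zero] at hrow
      exact hrow
    have hz : u' = 0 := by
      have : (hankel r γ)⁻¹ *ᵥ ((hankel r γ) *ᵥ u') = u' := by
        rw [Matrix.mulVec_mulVec, Matrix.nonsing_inv_mul _ hdet, Matrix.one_mulVec]
      rw [hker', Matrix.mulVec_zero] at this
      exact this.symm
    funext b
    show u b = 0
    induction b using Fin.lastCases with
    | last => exact hL0
    | cast i => exact congrFun hz i
  refine ⟨fun j => - u j.castSucc / u (Fin.last r), fun s hs => ?_⟩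
  have hsum : ∑ j : Fin r, γ (s + (j:ℕ)) * u j.castSucc
      + γ (s + r) * u (Fin.last r) = 0 := by
    unfold Urel at hs
    rw [Fin.sum_univ_castSucc] at hs
    simpa using hs
  have key : ∑ j : Fin r, (- u j.castSucc / u (Fin.last r)) * γ (s + (j:ℕ))
      = γ (s + r) := by
    have h1 : ∑ j : Fin r, (- u j.castSucc / u (Fin.last r)) * γ (s + (j:ℕ))
        = (∑ j : Fin r, γ (s + (j:ℕ)) * u j.castSucc) * (-1 / u (Fin.last r)) := by
      rw [Finset.sum_mul]
      exact Finset.sum_congr rfl fun j _ => by ring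
    rw [h1, show ∑ j : Fin r, γ (s + (j:ℕ)) * u j.castSucc
        = -(γ (s + r) * u (Fin.last r)) from by linarith]
    field_simp
  exact key.symm

end



section
variable {r : ℕ} {δ : ℕ → ℝ}

/-- companion matrix of the recursion given by `φ` -/
def comp (r : ℕ) (φ : Fin r → ℝ) : Matrix (Fin r) (Fin r) ℝ :=
  fun i j => if (j:ℕ) = r-1 then φ i else if (i:ℕ) = (j:ℕ)+1 then 1 else 0

lemma comp_mulVec (hr : 1 ≤ r) (φ : Fin r → ℝ) (z : Fin r → ℝ) (i : Fin r) :
    (comp r φ *ᵥ z) i = φ i * z ⟨r-1, by omega⟩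
      + (if h : 1 ≤ (i:ℕ) then z ⟨(i:ℕ)-1, by omega⟩ else 0) := by
  have hi := i.isLt
  show ∑ j, comp r φ i j * z j = _
  have hsplit : ∀ j : Fin r, comp r φ i j * z j
      = (if j = (⟨r-1, by omega⟩ : Fin r) then φ i * z j else 0)
        + (if (¬ j = (⟨r-1, by omega⟩ : Fin r)) ∧ (i:ℕ) = (j:ℕ)+1 then z j else 0) := by
    intro j
    by_cases h1 : j = (⟨r-1, by omega⟩ : Fin r)
    · have : (j:ℕ) = r-1 := by rw [h1]
      simp [comp, h1, this]
    · have h1' : (j:ℕ) ≠ r-1 := fun hc => h1 (Fin.ext hc)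
      by_cases h2 : (i:ℕ) = (j:ℕ)+1 <;> simp [comp, h1, h1', h2]
  rw [Finset.sum_congr rfl (fun j _ => hsplit j), Finset.sum_add_distrib]
  congr 1
  · simp [Finset.sum_ite_eq']
  · by_cases hi1 : 1 ≤ (i:ℕ)
    · rw [dif_pos hi1]
      refine (Finset.sum_eq_single (⟨(i:ℕ)-1, by omega⟩ : Fin r) ?_ ?_).trans ?_
      · intro b _ hb
        rw [if_neg]
        rintro ⟨hb1, hb2⟩
        exact hb (Fin.ext (by simp only [Fin.val_mk]; omega))
      · intro hmem
        exact absurd (Finset.mem_univ _) hmem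
      · rw [if_pos]
        constructor
        · intro hc
          have : (i:ℕ)-1 = r-1 := by
            have := congrArg Fin.val hc
            simpa using this
          omega
        · simp; omega
    · rw [dif_neg hi1]
      refine Finset.sum_eq_zero fun j _ => ?_
      rw [if_neg]
      rintro ⟨_, hb2⟩
      omega

lemma eig_unique (hr : 1 ≤ r) (φ : Fin r → ℝ) (lam : ℝ) (z : Fin r → ℝ)
    (hz : comp r φ *ᵥ z = lam • z) (hz0 : z ⟨r-1, by omega⟩ = 0) : z = 0 := by
  have main : ∀ d, d ≤ r-1 → z ⟨r-1-d, by omega⟩ = 0 := by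
    intro d
    induction d with
    | zero => intro _; simpa using hz0
    | succ d ihd =>
      intro hd
      have hzd : z ⟨r-1-d, by omega⟩ = 0 := ihd (by omega)
      have hrow := congrFun hz ⟨r-1-d, by omega⟩
      rw [comp_mulVec hr φ z ⟨r-1-d, by omega⟩] at hrow
      rw [dif_pos (by simp; omega)] at hrow
      simp only [hz0, mul_zero, zero_add, Pi.smul_apply, smul_eq_mul, hzd, mul_zero] at hrow
      have : ((⟨r-1-d, by omega⟩ : Fin r) : ℕ) - 1 = r-1-(d+1) := by simp; omega
      rw [show (⟨((⟨r-1-d, by omega⟩ : Fin r) : ℕ)-1, by omega⟩ : Fin r)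
          = (⟨r-1-(d+1), by omega⟩ : Fin r) from Fin.ext (by simp; omega)] at hrow
      exact hrow
  funext b
  have hb := b.isLt
  have := main (r-1-(b:ℕ)) (by omega)
  rw [show (⟨r-1-(r-1-(b:ℕ)), by omega⟩ : Fin r) = b from Fin.ext
    (by simp only [Fin.val_mk]; omega)] at this
  simpa using this

lemma eig_root (hr : 1 ≤ r) (φ : Fin r → ℝ) (lam : ℝ)
    (hd : (comp r φ - lam • 1).det = 0) :
    lam ^ r = ∑ j : Fin r, φ j * lam ^ (j:ℕ) := by
  have hdT : ((comp r φ)ᵀ - lam • 1).det = 0 := by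
    rw [show (comp r φ)ᵀ - lam • 1 = (comp r φ - lam • 1)ᵀ from by
      rw [Matrix.transpose_sub, Matrix.transpose_smul, Matrix.transpose_one], Matrix.det_transpose]
    exact hd
  obtain ⟨y, hy0, hy⟩ := Matrix.exists_mulVec_eq_zero_iff.mpr hdT
  have heig : (comp r φ)ᵀ *ᵥ y = lam • y := by
    have := congrArg (fun M => M *ᵥ y) (sub_add_cancel ((comp r φ)ᵀ) (lam • 1))
    simp only [Matrix.add_mulVec, hy, zero_add] at this
    calc (comp r φ)ᵀ *ᵥ y = ((comp r φ)ᵀ - lam • 1) *ᵥ y + (lam • 1) *ᵥ y := by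
          rw [← Matrix.add_mulVec, sub_add_cancel]
      _ = lam • y := by rw [hy, zero_add, Matrix.smul_mulVec, Matrix.one_mulVec]
  -- rows for i < r-1 : y_{i+1} = lam * y_i
  have hstep : ∀ i : Fin r, ∀ _hilt : (i:ℕ) < r-1, y ⟨(i:ℕ)+1, by omega⟩ = lam * y i := by
    intro i hilt
    have hrow := congrFun heig i
    have hlhs : ((comp r φ)ᵀ *ᵥ y) i = y ⟨(i:ℕ)+1, by omega⟩ := by
      show ∑ j, (comp r φ)ᵀ i j * y j = _
      refine (Finset.sum_eq_single (⟨(i:ℕ)+1, by omega⟩ : Fin r) ?_ ?_).trans ?_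
      · intro b _ hb
        have : comp r φ b i = 0 := by
          rw [comp, if_neg (by omega)]
          rw [if_neg]
          intro hc
          exact hb (Fin.ext (by simp only [Fin.val_mk]; omega))
        rw [Matrix.transpose_apply, this, zero_mul]
      · intro hmem; exact absurd (Finset.mem_univ _) hmem
      · rw [Matrix.transpose_apply, comp, if_neg (by omega), if_pos (by simp)]
        rw [one_mul]
    rw [hlhs] at hrow
    simpa using hrow
  -- geometric form
  have hgeom : ∀ d, ∀ _hd : d ≤ r-1, y ⟨d, by omega⟩ = y ⟨0, by omega⟩ * lam ^ d := by
    intro d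
    induction d with
    | zero => intro _; simp
    | succ d ihd =>
      intro hd
      have := hstep ⟨d, by omega⟩ (by simp only [Fin.val_mk]; omega)
      rw [ihd (by omega)] at this
      rw [show (⟨(d:ℕ)+1, by omega⟩ : Fin r) = (⟨d+1, by omega⟩ : Fin r) from rfl] at this
      rw [this, pow_succ]
      ring
  have hy00 : y ⟨0, by omega⟩ ≠ 0 := by
    intro h0
    apply hy0
    funext b
    have hb := b.isLt
    have := hgeom (b:ℕ) (by omega)
    rw [show (⟨(b:ℕ), by omega⟩ : Fin r) = b from Fin.ext rfl, h0, zero_mul] at this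
    simpa using this
  -- last row
  have hrowlast := congrFun heig ⟨r-1, by omega⟩
  have hlast : ((comp r φ)ᵀ *ᵥ y) ⟨r-1, by omega⟩ = ∑ j : Fin r, φ j * y j := by
    show ∑ j, (comp r φ)ᵀ _ j * y j = _
    refine Finset.sum_congr rfl fun j _ => ?_
    rw [Matrix.transpose_apply, comp, if_pos (by simp)]
  rw [hlast] at hrowlast
  have hsub : ∀ j : Fin r, y j = y ⟨0, by omega⟩ * lam ^ (j:ℕ) := by
    intro j
    have hb := j.isLt
    have := hgeom (j:ℕ) (by omega)
    rwa [show (⟨(j:ℕ), by omega⟩ : Fin r) = j from Fin.ext rfl] at this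
  have final : ∑ j : Fin r, φ j * (y ⟨0, by omega⟩ * lam ^ (j:ℕ))
      = lam * (y ⟨0, by omega⟩ * lam ^ (r-1)) := by
    calc ∑ j : Fin r, φ j * (y ⟨0, by omega⟩ * lam ^ (j:ℕ))
        = ∑ j : Fin r, φ j * y j := by
          exact Finset.sum_congr rfl fun j _ => by rw [← hsub j]
      _ = lam * y ⟨r-1, by omega⟩ := by
          rw [hrowlast]; simp
      _ = lam * (y ⟨0, by omega⟩ * lam ^ (r-1)) := by rw [hsub ⟨r-1, by omega⟩]
  have hpow : lam * lam ^ (r-1) = lam ^ r := by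
    rw [← pow_succ']
    congr 1
    omega
  have : y ⟨0, by omega⟩ * (∑ j : Fin r, φ j * lam ^ (j:ℕ)) = y ⟨0, by omega⟩ * lam ^ r := by
    rw [Finset.mul_sum]
    calc ∑ j : Fin r, y ⟨0, by omega⟩ * (φ j * lam ^ (j:ℕ))
        = ∑ j : Fin r, φ j * (y ⟨0, by omega⟩ * lam ^ (j:ℕ)) := by
          exact Finset.sum_congr rfl fun j _ => by ring
      _ = lam * (y ⟨0, by omega⟩ * lam ^ (r-1)) := final
      _ = y ⟨0, by omega⟩ * lam ^ r := by rw [← hpow]; ring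
  have := mul_left_cancel₀ hy00 this
  rw [this]

end



section
variable {r : ℕ} {δ : ℕ → ℝ}

lemma hankel_mul_comp (hr : 1 ≤ r) (φ : Fin r → ℝ)
    (hφ : (hankel r δ) *ᵥ φ = fun i : Fin r => δ ((i:ℕ) + r)) :
    hankel r δ * comp r φ = hankel r (fun t => δ (t+1)) := by
  ext i j
  rw [Matrix.mul_apply]
  by_cases hj : (j:ℕ) = r-1
  · have : ∑ k, hankel r δ i k * comp r φ k j = ∑ k, hankel r δ i k * φ k := by
      refine Finset.sum_congr rfl fun k _ => ?_
      rw [comp, if_pos hj]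
    rw [this]
    have hrow := congrFun hφ i
    simp only [Matrix.mulVec, dotProduct] at hrow
    rw [hrow]
    show δ ((i:ℕ) + r) = δ ((i:ℕ) + (j:ℕ) + 1)
    congr 1
    omega
  · have hjlt := j.isLt
    refine (Finset.sum_eq_single (⟨(j:ℕ)+1, by omega⟩ : Fin r) ?_ ?_).trans ?_
    · intro b _ hb
      have : comp r φ b j = 0 := by
        rw [comp, if_neg hj, if_neg]
        intro hc
        exact hb (Fin.ext (by simp only [Fin.val_mk]; omega))
      rw [this, mul_zero]
    · intro hmem; exact absurd (Finset.mem_univ _) hmem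
    · rw [comp, if_neg hj, if_pos (by simp), mul_one]
      rfl

lemma spectral_atoms (hr : 1 ≤ r) (hH : (hankel r δ).PosDef)
    (hA : (hankel r (fun t => δ (t+1))).PosSemidef)
    (φ : Fin r → ℝ) (hφ : (hankel r δ) *ᵥ φ = fun i : Fin r => δ ((i:ℕ) + r)) :
    ∃ x : Fin r → ℝ, Function.Injective x ∧ (∀ k, 0 ≤ x k) ∧
      (∀ k, x k ^ r = ∑ j : Fin r, φ j * x k ^ (j:ℕ)) := by
  classical
  set H := hankel r δ with hHdef
  set A := hankel r (fun t => δ (t+1)) with hAdef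
  have hHdet : IsUnit H.det := isUnit_iff_ne_zero.mpr (ne_of_gt hH.det_pos)
  open scoped MatrixOrder in
  set N := CFC.sqrt H with hNdef
  open scoped MatrixOrder in
  have hN2 : N * N = H := CFC.sqrt_mul_sqrt_self H hH.posSemidef.nonneg
  open scoped MatrixOrder in
  have hNherm : Nᴴ = N := (CFC.sqrt_nonneg H).posSemidef.isHermitian
  have hNdet : IsUnit N.det := by
    have : N.det * N.det = H.det := by rw [← Matrix.det_mul, hN2]
    exact isUnit_of_mul_isUnit_left (this.symm ▸ hHdet)
  set S := N⁻¹ * A * N⁻¹ with hSdef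
  have hSpsd : S.PosSemidef := by
    have := hA.conjTranspose_mul_mul_same (B := N⁻¹)
    rwa [Matrix.conjTranspose_nonsing_inv, hNherm] at this
  -- companion equals N⁻¹ S N (we use C = H⁻¹ A = N⁻¹ N⁻¹ A)
  have hHC : H * comp r φ = A := hankel_mul_comp hr φ hφ
  have hCval : comp r φ = N⁻¹ * (N⁻¹ * A) := by
    have h1 : comp r φ = H⁻¹ * A := by
      rw [← hHC, ← Matrix.mul_assoc, Matrix.nonsing_inv_mul _ hHdet, Matrix.one_mul]
    rw [h1, ← hN2, Matrix.mul_inv_rev, Matrix.mul_assoc]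
  have hSH : S.IsHermitian := hSpsd.isHermitian
  set lam := hSH.eigenvalues with hlam
  set bas := hSH.eigenvectorBasis with hbas
  set u : Fin r → Fin r → ℝ :=
    fun k => (WithLp.equiv 2 ((i : Fin r) → ℝ)) (bas k) with hu
  have hSu : ∀ k, S *ᵥ u k = lam k • u k := fun k => hSH.mulVec_eigenvectorBasis k
  set w : Fin r → Fin r → ℝ := fun k => N⁻¹ *ᵥ u k with hwdef
  have hNw : ∀ k, N *ᵥ w k = u k := by
    intro k
    rw [hwdef]
    show N *ᵥ (N⁻¹ *ᵥ u k) = u k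
    rw [Matrix.mulVec_mulVec, Matrix.mul_nonsing_inv _ hNdet, Matrix.one_mulVec]
  have hCN : comp r φ * N⁻¹ = N⁻¹ * S := by
    rw [hCval, hSdef]
    simp only [Matrix.mul_assoc]
  have hCw : ∀ k, comp r φ *ᵥ w k = lam k • w k := by
    intro k
    show comp r φ *ᵥ (N⁻¹ *ᵥ u k) = lam k • (N⁻¹ *ᵥ u k)
    rw [Matrix.mulVec_mulVec, hCN, ← Matrix.mulVec_mulVec, hSu k, Matrix.mulVec_smul]
  have hbne : ∀ k, bas k ≠ 0 := fun k => by
    have := bas.toBasis.ne_zero k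
    rwa [OrthonormalBasis.coe_toBasis] at this
  have hu0 : ∀ k, u k ≠ 0 := fun k h => hbne k (by
    apply (WithLp.equiv 2 ((i : Fin r) → ℝ)).injective
    simpa [hu] using h)
  have hw0 : ∀ k, w k ≠ 0 := fun k h => hu0 k (by rw [← hNw k, h, Matrix.mulVec_zero])
  have hdot : ∀ k l, u k ⬝ᵥ u l = if k = l then 1 else 0 := by
    intro k l
    have := orthonormal_iff_ite.mp bas.orthonormal k l
    simpa [dotProduct, PiLp.inner_apply, RCLike.inner_apply, starRingEnd_apply, hu, mul_comm]
      using this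
  have hwlast0 : ∀ k, w k ⟨r-1, by omega⟩ = 0 → False := by
    intro k hk
    exact hw0 k (eig_unique hr φ (lam k) (w k) (hCw k) hk)
  have hinj : Function.Injective lam := by
    intro k l hkl
    by_contra hne
    set a := w l ⟨r-1, by omega⟩ with hadef
    set b := w k ⟨r-1, by omega⟩ with hbdef
    set z := a • w k - b • w l with hzdef
    have hCz : comp r φ *ᵥ z = lam k • z := by
      rw [hzdef, Matrix.mulVec_sub, Matrix.mulVec_smul, Matrix.mulVec_smul, hCw k, hCw l,
        ← hkl, smul_sub, smul_smul, smul_smul, smul_smul, smul_smul, mul_comm (lam k) a,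
        mul_comm (lam k) b]
    have hz0 : z ⟨r-1, by omega⟩ = 0 := by
      rw [hzdef]
      simp only [Pi.sub_apply, Pi.smul_apply, smul_eq_mul, ← hadef, ← hbdef]
      ring
    have hzz : z = 0 := eig_unique hr φ (lam k) z hCz hz0
    have hE : a • u k = b • u l := by
      have h1 : a • w k = b • w l := sub_eq_zero.mp (hzdef ▸ hzz)
      have h2 := congrArg (fun v => N *ᵥ v) h1
      simpa only [Matrix.mulVec_smul, hNw] using h2
    have ha0 : a = 0 := by
      have := congrArg (fun v => v ⬝ᵥ u k) hE
      simp only [smul_dotProduct, smul_eq_mul, hdot, if_pos rfl,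
        if_neg (Ne.symm hne : ¬ l = k)] at this
      simpa using this
    have hb0 : b = 0 := by
      have := congrArg (fun v => v ⬝ᵥ u l) hE
      simp only [smul_dotProduct, smul_eq_mul, hdot, if_pos rfl,
        if_neg (hne : ¬ k = l)] at this
      simpa using this.symm
    exact hwlast0 k hb0
  have hroot : ∀ k, lam k ^ r = ∑ j : Fin r, φ j * lam k ^ (j:ℕ) := by
    intro k
    have hker : (comp r φ - lam k • 1) *ᵥ w k = 0 := by
      rw [Matrix.sub_mulVec, hCw k, Matrix.smul_mulVec, Matrix.one_mulVec, sub_self]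
    have hdet : (comp r φ - lam k • 1).det = 0 :=
      Matrix.exists_mulVec_eq_zero_iff.mp ⟨w k, hw0 k, hker⟩
    exact eig_root hr φ (lam k) hdet
  exact ⟨lam, hinj, fun k => hSpsd.eigenvalues_nonneg k, hroot⟩

end



section
variable {r : ℕ} {δ : ℕ → ℝ}

lemma match_extend {M : ℕ} (hr : 1 ≤ r) (δ : ℕ → ℝ) (φ x c : Fin r → ℝ)
    (hroot : ∀ k, x k ^ r = ∑ j : Fin r, φ j * x k ^ (j:ℕ))
    (hrec : ∀ s, s + r ≤ M → δ (s + r) = ∑ j : Fin r, φ j * δ (s + (j:ℕ)))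
    (hbase : ∀ t, t < r → δ t = ∑ k, c k * x k ^ t) :
    ∀ t, t ≤ M → δ t = ∑ k, c k * x k ^ t := by
  intro t
  induction t using Nat.strong_induction_on with
  | _ t ih =>
    intro ht
    by_cases htr : t < r
    · exact hbase t htr
    · push_neg at htr
      set s := t - r with hs
      have h1 : δ t = ∑ j : Fin r, φ j * δ (s + (j:ℕ)) := by
        have := hrec s (by omega)
        rwa [show s + r = t from by omega] at this
      have h2 : ∀ j : Fin r, δ (s + (j:ℕ)) = ∑ k, c k * x k ^ (s + (j:ℕ)) := by
        intro j
        have hj := j.isLt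
        exact ih (s + (j:ℕ)) (by omega) (by omega)
      rw [h1, Finset.sum_congr rfl (fun j _ => by rw [h2 j, Finset.mul_sum])]
      rw [Finset.sum_comm]
      refine Finset.sum_congr rfl fun k _ => ?_
      have : ∑ j : Fin r, φ j * (c k * x k ^ (s + (j:ℕ)))
          = c k * x k ^ s * ∑ j : Fin r, φ j * x k ^ (j:ℕ) := by
        rw [Finset.mul_sum]
        refine Finset.sum_congr rfl fun j _ => ?_
        rw [pow_add]
        ring
      rw [this, ← hroot k, mul_assoc, ← pow_add, show s + r = t from by omega]

lemma core (hr : 1 ≤ r) (hH : (hankel r δ).PosDef)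
    (hA : (hankel r (fun t => δ (t+1))).PosSemidef)
    (φ : Fin r → ℝ) (hφ : (hankel r δ) *ᵥ φ = fun i : Fin r => δ ((i:ℕ) + r)) :
    ∃ x c : Fin r → ℝ, Function.Injective x ∧ (∀ k, 0 ≤ x k) ∧ (∀ k, 0 < c k) ∧
      (∀ k, x k ^ r = ∑ j : Fin r, φ j * x k ^ (j:ℕ)) ∧
      (∀ t, t < r → δ t = ∑ k, c k * x k ^ t) := by
  classical
  obtain ⟨x, hinj, hx0, hroot⟩ := spectral_atoms hr hH hA φ hφ
  set V := (Matrix.vandermonde x)ᵀ with hV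
  have hVdet : IsUnit V.det := by
    rw [hV, Matrix.det_transpose, Matrix.det_vandermonde]
    refine isUnit_iff_ne_zero.mpr (Finset.prod_ne_zero_iff.mpr fun i _ => ?_)
    refine Finset.prod_ne_zero_iff.mpr fun j hj => ?_
    have hij : i ≠ j := by
      intro h
      rw [h] at hj
      exact absurd (Finset.mem_Ioi.mp hj) (lt_irrefl j)
    exact sub_ne_zero.mpr fun hc => hij (hinj hc).symm
  set c := V⁻¹ *ᵥ (fun t : Fin r => δ (t:ℕ)) with hc
  have hVc : V *ᵥ c = fun t : Fin r => δ (t:ℕ) := by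
    rw [hc, Matrix.mulVec_mulVec, Matrix.mul_nonsing_inv _ hVdet, Matrix.one_mulVec]
  have hbase : ∀ t, t < r → δ t = ∑ k, c k * x k ^ t := by
    intro t ht
    have := congrFun hVc ⟨t, ht⟩
    simp only [Matrix.mulVec, dotProduct, hV, Matrix.transpose_apply,
      Matrix.vandermonde_apply] at this
    rw [← this]
    exact Finset.sum_congr rfl fun k _ => by ring
  have hrec : ∀ s, s + r ≤ 2*r-1 → δ (s + r) = ∑ j : Fin r, φ j * δ (s + (j:ℕ)) := by
    intro s hsr
    have hrow := congrFun hφ ⟨s, by omega⟩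
    simp only [Matrix.mulVec, dotProduct, hankel] at hrow
    rw [← hrow]
    exact Finset.sum_congr rfl fun j _ => by ring
  have hmatch : ∀ t, t ≤ 2*r-1 → δ t = ∑ k, c k * x k ^ t :=
    match_extend hr δ φ x c hroot hrec hbase
  -- positivity of weights via Lagrange interpolation
  have hcpos : ∀ k, 0 < c k := by
    intro k
    set ℓ := Lagrange.basis (Finset.univ : Finset (Fin r)) x k with hℓ
    have hinjOn : Set.InjOn x (Finset.univ : Finset (Fin r)) := fun p _ q _ h => hinj h
    have hdeg : ℓ.natDegree < r := by
      rw [hℓ, Lagrange.natDegree_basis hinjOn (Finset.mem_univ k)]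
      simp only [Finset.card_univ, Fintype.card_fin]
      omega
    set a : Fin r → ℝ := fun i => ℓ.coeff (i:ℕ) with ha
    have heval : ∀ y : ℝ, Polynomial.eval y ℓ = ∑ i : Fin r, a i * y ^ (i:ℕ) := by
      intro y
      rw [Polynomial.eval_eq_sum_range' hdeg y, ← Fin.sum_univ_eq_sum_range]
    have ha0 : a ≠ 0 := by
      intro h0
      have h1 : Polynomial.eval (x k) ℓ = 1 :=
        Lagrange.eval_basis_self hinjOn (Finset.mem_univ k)
      rw [heval (x k), h0] at h1
      simp at h1
    have key : a ⬝ᵥ (hankel r δ) *ᵥ a = c k := by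
      have step1 : a ⬝ᵥ (hankel r δ) *ᵥ a
          = ∑ i : Fin r, ∑ j : Fin r, (a i * a j) * δ ((i:ℕ)+(j:ℕ)) := by
        simp only [dotProduct, Matrix.mulVec, hankel, Finset.mul_sum]
        exact Finset.sum_congr rfl fun i _ => Finset.sum_congr rfl fun j _ => by ring
      have step2 : ∀ (i j : Fin r), δ ((i:ℕ)+(j:ℕ)) = ∑ k', c k' * x k' ^ ((i:ℕ)+(j:ℕ)) := by
        intro i j
        have hi := i.isLt; have hj := j.isLt
        exact hmatch _ (by omega)
      have expand : ∀ k' : Fin r, c k' * ((∑ i : Fin r, a i * x k' ^ (i:ℕ))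
            * (∑ j : Fin r, a j * x k' ^ (j:ℕ)))
          = ∑ i : Fin r, ∑ j : Fin r, (a i * a j) * (c k' * x k' ^ ((i:ℕ)+(j:ℕ))) := by
        intro k'
        rw [Finset.sum_mul_sum, Finset.mul_sum]
        refine Finset.sum_congr rfl fun i _ => ?_
        rw [Finset.mul_sum]
        refine Finset.sum_congr rfl fun j _ => ?_
        rw [pow_add]
        ring
      have step3 : a ⬝ᵥ (hankel r δ) *ᵥ a
          = ∑ k', c k' * ((∑ i : Fin r, a i * x k' ^ (i:ℕ))
              * (∑ j : Fin r, a j * x k' ^ (j:ℕ))) := by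
        calc a ⬝ᵥ (hankel r δ) *ᵥ a
            = ∑ i : Fin r, ∑ j : Fin r, ∑ k' : Fin r,
                (a i * a j) * (c k' * x k' ^ ((i:ℕ)+(j:ℕ))) := by
              rw [step1]
              exact Finset.sum_congr rfl fun i _ => Finset.sum_congr rfl fun j _ => by
                rw [step2 i j, Finset.mul_sum]
          _ = ∑ i : Fin r, ∑ k' : Fin r, ∑ j : Fin r,
                (a i * a j) * (c k' * x k' ^ ((i:ℕ)+(j:ℕ))) :=
              Finset.sum_congr rfl fun i _ => Finset.sum_comm
          _ = ∑ k' : Fin r, ∑ i : Fin r, ∑ j : Fin r,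
                (a i * a j) * (c k' * x k' ^ ((i:ℕ)+(j:ℕ))) := Finset.sum_comm
          _ = ∑ k', c k' * ((∑ i : Fin r, a i * x k' ^ (i:ℕ))
              * (∑ j : Fin r, a j * x k' ^ (j:ℕ))) :=
              Finset.sum_congr rfl fun k' _ => (expand k').symm
      rw [step3, Finset.sum_congr rfl (fun k' _ => by rw [← heval (x k')])]
      refine (Finset.sum_eq_single k ?_ ?_).trans ?_
      · intro k' _ hk'
        rw [Lagrange.eval_basis_of_ne (hk'.symm) (Finset.mem_univ k')]
        ring
      · intro hmem
        exact absurd (Finset.mem_univ _) hmem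
      · rw [Lagrange.eval_basis_self hinjOn (Finset.mem_univ k)]
        ring
    have hpos : 0 < a ⬝ᵥ (hankel r δ) *ᵥ a := by
      have := hH.dotProduct_mulVec_pos ha0
      simpa using this
    rw [← key]
    exact hpos
  exact ⟨x, c, hinj, hx0, hcpos, hroot, hbase⟩

end



lemma integrable_dirac' {f : ℝ → ℝ} (hf : Measurable f) (a : ℝ) :
    Integrable f (Measure.dirac a) := by
  refine ⟨hf.aestronglyMeasurable, ?_⟩
  show (∫⁻ x, ‖f x‖ₑ ∂Measure.dirac a) < ⊤
  rw [MeasureTheory.lintegral_dirac' a (by exact hf.enorm)]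
  exact enorm_lt_top

lemma build_measure (r N : ℕ) (γ : ℕ → ℝ) (x c : Fin r → ℝ)
    (hinj : Function.Injective x) (hx0 : ∀ k, 0 ≤ x k) (hc : ∀ k, 0 < c k)
    (hmom : ∀ t, t ≤ N → γ t = ∑ k, c k * x k ^ t) :
    ∃ ν : Measure ℝ, IsRepMeasure1 N γ (Set.Ici 0) ν ∧ IsAtomicMeasure1 r ν := by
  classical
  set ν : Measure ℝ := ∑ k : Fin r, ENNReal.ofReal (c k) • Measure.dirac (x k) with hν
  have hmeas : MeasurableSet ((Set.Ici (0:ℝ))ᶜ) := measurableSet_Ici.compl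
  refine ⟨ν, ⟨?_, ?_⟩, ⟨x, c, hinj, hc, rfl⟩⟩
  · rw [hν, Measure.finset_sum_apply]
    refine Finset.sum_eq_zero fun k _ => ?_
    rw [Measure.smul_apply, Measure.dirac_apply' _ hmeas]
    rw [Set.indicator_of_notMem]
    · simp
    · simp only [Set.mem_compl_iff, Set.mem_Ici, not_not]
      exact hx0 k
  · intro t ht
    have hint : Integrable (fun y : ℝ => y ^ t) ν := by
      rw [hν]
      refine integrable_finset_sum_measure.mpr fun k _ => ?_
      exact (integrable_dirac' (show Measurable fun y : ℝ => y ^ t from by measurability) (x k)).smul_measure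
        ENNReal.ofReal_ne_top
    refine ⟨hint, ?_⟩
    rw [hν, MeasureTheory.integral_finset_sum_measure (fun k _ =>
      (integrable_dirac' (show Measurable fun y : ℝ => y ^ t from by measurability) (x k)).smul_measure
        ENNReal.ofReal_ne_top)]
    rw [hmom t ht]
    refine Finset.sum_congr rfl fun k _ => ?_
    rw [MeasureTheory.integral_smul_measure, MeasureTheory.integral_dirac,
      ENNReal.toReal_ofReal (hc k).le]
    simp




section
variable {γ : ℕ → ℝ} {m : ℕ}

lemma flat_ext_psd (hm : 1 ≤ m) (hpsd2 : (hankel m (fun t => γ (t+1))).PosSemidef)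
    (v : Fin m → ℝ)
    (hv : (hankel m (fun t => γ (t+1))) *ᵥ v = fun i : Fin m => γ (m+1+(i:ℕ)))
    (δ : ℕ → ℝ) (hδl : ∀ t, t ≤ 2*m → δ t = γ t)
    (hδtop : δ (2*m+1) = ∑ j : Fin m, v j * γ (m+1+(j:ℕ))) :
    (hankel (m+1) (fun t => δ (t+1))).PosSemidef := by
  classical
  set B := hankel m (fun t => γ (t+1)) with hB
  set L : Matrix (Fin m) (Fin (m+1)) ℝ :=
    fun i j => if (j:ℕ) = m then v i else if (i:ℕ) = (j:ℕ) then 1 else 0 with hL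
  have key : hankel (m+1) (fun t => δ (t+1)) = Lᴴ * B * L := by
    ext p q
    rw [Matrix.mul_assoc, Matrix.mul_apply]
    have hstar : ∀ i : Fin m, Lᴴ p i = L i p := fun i => by
      simp [Matrix.conjTranspose_apply]
    -- inner column values
    have hinner : ∀ i : Fin m, (B * L) i q
        = if (q:ℕ) = m then γ (m+1+(i:ℕ)) else γ ((i:ℕ) + (q:ℕ) + 1) := by
      intro i
      rw [Matrix.mul_apply]
      by_cases hq : (q:ℕ) = m
      · have : ∑ j, B i j * L j q = ∑ j, B i j * v j := by
          refine Finset.sum_congr rfl fun j _ => ?_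
          rw [hL]
          simp only [hq, if_pos]
        rw [this]
        have := congrFun hv i
        simp only [Matrix.mulVec, dotProduct] at this
        rw [if_pos hq, this]
      · have hqlt : (q:ℕ) < m := by have := q.isLt; omega
        rw [if_neg hq]
        refine (Finset.sum_eq_single (⟨(q:ℕ), hqlt⟩ : Fin m) ?_ ?_).trans ?_
        · intro b _ hb
          rw [hL]
          simp only [hq, if_false]
          rw [if_neg, mul_zero]
          intro hc
          exact hb (Fin.ext (by simp only [Fin.val_mk]; omega))
        · intro hmem; exact absurd (Finset.mem_univ _) hmem
        · rw [hL]
          simp only [hq, if_false, if_pos]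
          rw [mul_one, hB]
          rfl
    by_cases hp : (p:ℕ) = m
    · have houter : ∑ i, Lᴴ p i * (B * L) i q = ∑ i, v i * (B * L) i q := by
        refine Finset.sum_congr rfl fun i _ => ?_
        rw [hstar i, hL]
        simp only [hp, if_pos]
      rw [houter]
      by_cases hq : (q:ℕ) = m
      · have : ∑ i, v i * (B * L) i q = ∑ i, v i * γ (m+1+(i:ℕ)) := by
          refine Finset.sum_congr rfl fun i _ => ?_
          rw [hinner i, if_pos hq]
        rw [this]
        show δ ((p:ℕ) + (q:ℕ) + 1) = _
        rw [show (p:ℕ) + (q:ℕ) + 1 = 2*m+1 from by omega, hδtop]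
      · have hqlt : (q:ℕ) < m := by have := q.isLt; omega
        have : ∑ i, v i * (B * L) i q = ∑ i, v i * γ ((i:ℕ) + (q:ℕ) + 1) := by
          refine Finset.sum_congr rfl fun i _ => ?_
          rw [hinner i, if_neg hq]
        rw [this]
        have hrow := congrFun hv ⟨(q:ℕ), hqlt⟩
        simp only [Matrix.mulVec, dotProduct, hB, hankel] at hrow
        have : ∑ i, v i * γ ((i:ℕ) + (q:ℕ) + 1) = γ (m+1+(q:ℕ)) := by
          rw [← hrow]
          refine Finset.sum_congr rfl fun i _ => ?_
          rw [mul_comm]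
          congr 2 <;> (try simp only [Fin.val_mk]) <;> try omega
        rw [this]
        show δ ((p:ℕ) + (q:ℕ) + 1) = _
        rw [hδl _ (by omega)]
        congr 1
        omega
    · have hplt : (p:ℕ) < m := by have := p.isLt; omega
      have houter : ∑ i, Lᴴ p i * (B * L) i q = (B * L) ⟨(p:ℕ), hplt⟩ q := by
        refine (Finset.sum_eq_single (⟨(p:ℕ), hplt⟩ : Fin m) ?_ ?_).trans ?_
        · intro b _ hb
          rw [hstar b, hL]
          simp only [hp, if_false]
          rw [if_neg, zero_mul]
          intro hc
          exact hb (Fin.ext (by simp only [Fin.val_mk]; omega))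
        · intro hmem; exact absurd (Finset.mem_univ _) hmem
        · rw [hstar _, hL]
          simp only [hp, if_false]
          rw [if_pos (by simp only [Fin.val_mk]), one_mul]
      rw [houter, hinner ⟨(p:ℕ), hplt⟩]
      by_cases hq : (q:ℕ) = m
      · rw [if_pos hq]
        show δ ((p:ℕ) + (q:ℕ) + 1) = _
        rw [hδl _ (by omega)]
        congr 1 <;> (try simp only [Fin.val_mk]) <;> try omega
      · rw [if_neg hq]
        have hqlt : (q:ℕ) < m := by have := q.isLt; omega
        show δ ((p:ℕ) + (q:ℕ) + 1) = _
        rw [hδl _ (by omega)]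
        try congr 1 <;> (try simp only [Fin.val_mk]) <;> try omega
  rw [key]
  exact hpsd2.conjTranspose_mul_mul_same L

end

end CF

/-- (Curto–Fialkow, `[0,∞)` case, `n` even, `m = 3n/2`.)
The sequence `(γ_t)_{t ≤ 3n}` admits a `[0,∞)`-representing measure iff it admits a
`(rank γ)`-atomic one, iff `H_m(γ)` and the shifted Hankel matrix
`(γ_{i+j+1})_{i,j=0}^{m-1}` are positive semidefinite and `(γ_{m+1}, …, γ_{2m})ᵀ` lies in
the column space of the latter; moreover in this case `rank γ ≤ m + 1`. -/
theorem halfline_TMP_even (n m : ℕ) (hn : 2 ≤ n) (hm : 2*m = 3*n) (γ : ℕ → ℝ) :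
    ((∃ ν : Measure ℝ, IsRepMeasure1 (3*n) γ (Set.Ici 0) ν) ↔
      (∃ ν : Measure ℝ, IsRepMeasure1 (3*n) γ (Set.Ici 0) ν ∧
        IsAtomicMeasure1 (seqRank m γ) ν)) ∧
    ((∃ ν : Measure ℝ, IsRepMeasure1 (3*n) γ (Set.Ici 0) ν) ↔
      ((hankel (m+1) γ).PosSemidef ∧
        (hankel m (fun t => γ (t+1))).PosSemidef ∧
        ∃ v : Fin m → ℝ, (hankel m (fun t => γ (t+1))).mulVec v =
          fun i : Fin m => γ (m + 1 + (i : ℕ)))) ∧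
    ((∃ ν : Measure ℝ, IsRepMeasure1 (3*n) γ (Set.Ici 0) ν) → seqRank m γ ≤ m + 1) := by
  classical
  have hm3 : 3 ≤ m := by omega
  -- characterization of seqRank
  have hchar : ∀ h : (∃ i, i ≤ m ∧ (hankel (i+1) γ).det = 0),
      seqRank m γ ≤ m ∧ (hankel (seqRank m γ + 1) γ).det = 0 ∧
        ∀ i, i < seqRank m γ → (hankel (i+1) γ).det ≠ 0 := by
    intro h
    unfold seqRank
    rw [dif_pos h]
    refine ⟨(Nat.find_spec h).1, (Nat.find_spec h).2, fun i hi hdet => ?_⟩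
    exact Nat.find_min h hi ⟨by have := (Nat.find_spec h).1; omega, hdet⟩
  have hchar2 : ¬ (∃ i, i ≤ m ∧ (hankel (i+1) γ).det = 0) → seqRank m γ = m+1 := by
    intro h
    unfold seqRank
    rw [dif_neg h]
  -- A → C
  have AtoC : (∃ ν : Measure ℝ, IsRepMeasure1 (3*n) γ (Set.Ici 0) ν) →
      ((hankel (m+1) γ).PosSemidef ∧
        (hankel m (fun t => γ (t+1))).PosSemidef ∧
        ∃ v : Fin m → ℝ, (hankel m (fun t => γ (t+1))).mulVec v =
          fun i : Fin m => γ (m + 1 + (i : ℕ))) := by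
    rintro ⟨ν, h0, hI⟩
    have hIm : CF.Moments (3*n) γ ν := hI
    refine ⟨?_, ?_, ?_⟩
    · exact CF.hankel_psd hIm h0 (m+1) 0 (by omega) (by omega)
    · exact CF.hankel_psd hIm h0 m 1 (by omega) (by omega)
    · exact CF.exists_range_v hIm h0 (by omega) (by omega)
  -- C → measure with seqRank-many atoms
  have CtoA : ((hankel (m+1) γ).PosSemidef ∧
        (hankel m (fun t => γ (t+1))).PosSemidef ∧
        ∃ v : Fin m → ℝ, (hankel m (fun t => γ (t+1))).mulVec v =
          fun i : Fin m => γ (m + 1 + (i : ℕ))) →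
      (∃ ν : Measure ℝ, IsRepMeasure1 (3*n) γ (Set.Ici 0) ν ∧
        IsAtomicMeasure1 (seqRank m γ) ν) := by
    rintro ⟨hpsd1, hpsd2, hvex⟩
    by_cases hex : ∃ i, i ≤ m ∧ (hankel (i+1) γ).det = 0
    · obtain ⟨hrm, hrdet, hrmin⟩ := hchar hex
      by_cases hr0 : seqRank m γ = 0
      · -- degenerate : γ vanishes
        have hγ0 : γ 0 = 0 := by
          have h1 := hrdet
          rw [hr0] at h1
          rw [Matrix.det_fin_one] at h1
          simpa [hankel] using h1
        have hz := CF.zero_case (γ := γ) (by omega) hpsd1 hγ0 hvex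
        obtain ⟨ν, hν1, hν2⟩ := CF.build_measure 0 (3*n) γ
          (fun i => i.elim0) (fun i => i.elim0) (fun a => a.elim0)
          (fun k => k.elim0) (fun k => k.elim0)
          (fun t ht => by rw [hz t (by omega)]; simp)
        refine ⟨ν, hν1, ?_⟩
        rw [hr0]
        exact hν2
      · have hr1 : 1 ≤ seqRank m γ := by omega
        set r := seqRank m γ with hrdef
        have hPD : (hankel r γ).PosDef := by
          refine CF.posDef_of_psd_det_ne_zero (CF.hankel_psd_mono (by omega) hpsd1) ?_
          have := hrmin (r-1) (by omega)
          rwa [show (r-1)+1 = r from by omega] at this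
        obtain ⟨u, hu0, hker⟩ := Matrix.exists_mulVec_eq_zero_iff.mpr hrdet
        have hUall := CF.propagation hr1 hrm hpsd1 u hker hvex
        obtain ⟨φ, hφrel⟩ := CF.phi_extract hr1 hPD u hu0 hker
        have hφ : (hankel r γ) *ᵥ φ = fun i : Fin r => γ ((i:ℕ) + r) := by
          funext i
          have hi := i.isLt
          have heq := hφrel (i:ℕ) (CF.urel_base u hker (by omega))
          show ∑ j, hankel r γ i j * φ j = γ ((i:ℕ) + r)
          rw [heq]
          refine Finset.sum_congr rfl fun j _ => ?_
          show γ ((i:ℕ)+(j:ℕ)) * φ j = φ j * γ ((i:ℕ) + (j:ℕ))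
          ring
        have hA : (hankel r (fun t => γ (t+1))).PosSemidef :=
          CF.hankel_psd_mono (by omega) hpsd2
        obtain ⟨x, c, hinj, hx0, hcpos, hroot, hbase⟩ := CF.core hr1 hPD hA φ hφ
        have hrec : ∀ s, s + r ≤ 2*m → γ (s + r) = ∑ j : Fin r, φ j * γ (s + (j:ℕ)) :=
          fun s hs => hφrel s (hUall s hs)
        have hmom : ∀ t, t ≤ 3*n → γ t = ∑ k, c k * x k ^ t := fun t ht =>
          CF.match_extend hr1 γ φ x c hroot hrec hbase t (by omega)
        obtain ⟨ν, hν1, hν2⟩ := CF.build_measure r (3*n) γ x c hinj hx0 hcpos hmom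
        exact ⟨ν, hν1, hν2⟩
    · have hreq : seqRank m γ = m+1 := hchar2 hex
      push_neg at hex
      have hPD : (hankel (m+1) γ).PosDef :=
        CF.posDef_of_psd_det_ne_zero hpsd1 (hex m le_rfl)
      obtain ⟨v, hv⟩ := hvex
      set δ : ℕ → ℝ :=
        fun t => if t ≤ 2*m then γ t else ∑ j : Fin m, v j * γ (m+1+(j:ℕ)) with hδdef
      have hδl : ∀ t, t ≤ 2*m → δ t = γ t := by
        intro t ht
        simp only [hδdef]
        rw [if_pos ht]
      have hδtop : δ (2*m+1) = ∑ j : Fin m, v j * γ (m+1+(j:ℕ)) := by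
        simp only [hδdef]
        rw [if_neg (by omega)]
      have hHδ : hankel (m+1) δ = hankel (m+1) γ := by
        ext i j
        show δ ((i:ℕ) + (j:ℕ)) = γ ((i:ℕ) + (j:ℕ))
        exact hδl _ (by have := i.isLt; have := j.isLt; omega)
      have hPDδ : (hankel (m+1) δ).PosDef := by rw [hHδ]; exact hPD
      have hAδ := CF.flat_ext_psd (by omega) hpsd2 v hv δ hδl hδtop
      have hdetδ : IsUnit (hankel (m+1) δ).det :=
        isUnit_iff_ne_zero.mpr (ne_of_gt hPDδ.det_pos)
      set φ := (hankel (m+1) δ)⁻¹ *ᵥ (fun i : Fin (m+1) => δ ((i:ℕ) + (m+1))) with hφdef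
      have hφ : (hankel (m+1) δ) *ᵥ φ = fun i : Fin (m+1) => δ ((i:ℕ) + (m+1)) := by
        rw [hφdef, Matrix.mulVec_mulVec, Matrix.mul_nonsing_inv _ hdetδ, Matrix.one_mulVec]
      obtain ⟨x, c, hinj, hx0, hcpos, hroot, hbase⟩ := CF.core (by omega) hPDδ hAδ φ hφ
      have hrec : ∀ s, s + (m+1) ≤ 2*m+1 →
          δ (s + (m+1)) = ∑ j : Fin (m+1), φ j * δ (s + (j:ℕ)) := by
        intro s hs
        have hrow := congrFun hφ ⟨s, by omega⟩
        simp only [Matrix.mulVec, dotProduct, hankel] at hrow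
        rw [← hrow]
        exact Finset.sum_congr rfl fun j _ => by ring
      have hmomδ := CF.match_extend (M := 2*m+1) (by omega) δ φ x c hroot hrec hbase
      have hmom : ∀ t, t ≤ 3*n → γ t = ∑ k, c k * x k ^ t := by
        intro t ht
        rw [← hδl t (by omega)]
        exact hmomδ t (by omega)
      obtain ⟨ν, hν1, hν2⟩ := CF.build_measure (m+1) (3*n) γ x c hinj hx0 hcpos hmom
      refine ⟨ν, hν1, ?_⟩
      rw [hreq]
      exact hν2
  refine ⟨⟨fun hA => CtoA (AtoC hA), fun ⟨ν, hrep, _⟩ => ⟨ν, hrep⟩⟩,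
    ⟨AtoC, fun hC => ?_⟩, fun _ => ?_⟩
  · obtain ⟨ν, hrep, _⟩ := CtoA hC
    exact ⟨ν, hrep⟩
  · by_cases h : ∃ i, i ≤ m ∧ (hankel (i+1) γ).det = 0
    · have := (hchar h).1
      omega
    · rw [hchar2 h]

end
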